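/- Let γ be a b-linear translator of f : F_{q^n} → F_q and h : F_q → F_q. Then F(x) = x + γ·h(f(x)) is a permutation of F_{q^n} if and only if g(u) = b·h(u) + u is a permutation of F_q. -/

import Mathlib

/-- For `γ` a `b`-linear translator of `f` and `h : F_q → F_q`, the map
`F(x) = x + γ h(f(x))` permutes `F_{q^n}` iff `g(u) = b h(u) + u` permutes `F_q`. -/
theorem stmt_18 {K L : Type*} [Field K] [Fintype K] [Field L] [Fintype L] [Algebra K L]
    (f : L → K) (γ : L) (b : K) (h : K → K)
    (hγ0 : γ ≠ 0)
    (hb : ∀ (x : L) (u : K), f (x + u • γ) - f x = u * b) :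
    Function.Bijective (fun x : L => x + h (f x) • γ) ↔
      Function.Bijective (fun u : K => b * h u + u) := by
  have key : ∀ (x : L) (u : K), f (x + u • γ) = f x + u * b := fun x u => by
    have := hb x u; linear_combination this
  constructor
  · intro hF
    rw [← Finite.injective_iff_bijective]
    by_cases hb0 : b = 0
    · intro u1 u2 hg
      simpa [hb0] using hg
    · intro u1 u2 hg
      simp only at hg
      set x : L := ((u1 - f 0)/b) • γ with hx
      have hfx : f x = u1 := by
        have h0 := key 0 ((u1 - f 0)/b)
        rw [zero_add] at h0
        rw [hx, h0]
        field_simp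
        ring
      set y : L := x + ((u2 - u1)/b) • γ with hy
      have hfy : f y = u2 := by
        rw [hy, key, hfx]
        field_simp
        ring
      clear_value x y
      have hFxy : (fun x : L => x + h (f x) • γ) x = (fun x : L => x + h (f x) • γ) y := by
        simp only [hfx, hfy]
        have hh : h u2 = h u1 + (u1 - u2)/b := by
          field_simp
          linear_combination -hg
        rw [hy, hh, add_assoc, ← add_smul]
        congr 2
        field_simp
        ring
      have hxey := hF.1 hFxy
      rw [hy, left_eq_add, smul_eq_zero] at hxey
      rcases hxey with h0 | h0
      · field_simp at h0
        linear_combination -h0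
      · exact absurd h0 hγ0
  · intro hg
    rw [← Finite.injective_iff_bijective]
    intro x y hxy
    simp only at hxy
    have h1 : f (x + h (f x) • γ) = f (y + h (f y) • γ) := by rw [hxy]
    rw [key, key] at h1
    have h2 : f x = f y := hg.1 (show b * h (f x) + f x = b * h (f y) + f y by
      linear_combination h1)
    rw [h2] at hxy
    exact add_right_cancel hxy
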